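/- Let S be the (k+2)×(k+2) 0-1 matrix with S₁₂ = S₂₁ = 1, S₂,(i+2) = S_{(i+2),2} = 1 for i = 1,…,k, Sᵢᵢ = 1 for i = 2,…,k+2 (self-infection of the vector and each reservoir), and zeros elsewhere. Then the spectral radius of S is at most √(k+1) + 1. -/

import Mathlib

/-- Spectral radius of a real matrix: the supremum of the absolute values of the
(complex) roots of its characteristic polynomial. -/
noncomputable def specRad {n : Type*} [Fintype n] [DecidableEq n]
    (A : Matrix n n ℝ) : ℝ :=
  sSup {r : ℝ | ∃ μ : ℂ, ((A.map (algebraMap ℝ ℂ)).charpoly).IsRoot μ ∧ r = ‖μ‖}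

/-- The sign pattern `S` of the star NGM with self-infections: index `0` is the human,
index `1` the vector, indices `2,…,k+1` the reservoirs; `S₀₁ = S₁₀ = 1`,
`S₁,(i+2) = S_{(i+2),1} = 1`, `Sᵢᵢ = 1` for `i ≥ 1`, zeros elsewhere
(written with 0-based indices). -/
def Sstar (k : ℕ) : Matrix (Fin (k + 2)) (Fin (k + 2)) ℝ :=
  Matrix.of fun i j =>
    if (i.val = 0 ∧ j.val = 1) ∨ (i.val = 1 ∧ j.val = 0) ∨
        (i.val = 1 ∧ 2 ≤ j.val) ∨ (j.val = 1 ∧ 2 ≤ i.val) ∨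
        (i = j ∧ 1 ≤ i.val) then 1 else 0

open Polynomial Matrix
lemma exists_eigenvector_of_isRoot {n : Type*} [Fintype n] [DecidableEq n]
    (A : Matrix n n ℂ) (μ : ℂ) (h : A.charpoly.IsRoot μ) :
    ∃ v ≠ 0, A.mulVec v = μ • v := by
  have hdet : (Matrix.scalar n μ - A).det = 0 := by
    have := h
    rw [Polynomial.IsRoot, Matrix.charpoly, eval_det] at this
    rwa [matPolyEquiv_charmatrix, eval_sub, eval_X, eval_C] at this
  obtain ⟨v, hv, hmv⟩ := (Matrix.exists_mulVec_eq_zero_iff).mpr hdet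
  refine ⟨v, hv, ?_⟩
  rw [Matrix.sub_mulVec] at hmv
  have hsc : (Matrix.scalar n μ).mulVec v = μ • v := by
    rw [Matrix.scalar_apply]; ext i; simp [Matrix.mulVec_diagonal]
  rw [← hsc]; exact (sub_eq_zero.mp hmv).symm

/-- the weight vector -/
noncomputable def dw (k : ℕ) (j : Fin (k + 2)) : ℝ :=
  if j.val = 1 then Real.sqrt (k + 1) else 1

lemma dw_pos (k : ℕ) (j : Fin (k + 2)) : 0 < dw k j := by
  unfold dw
  split
  · exact Real.sqrt_pos.mpr (by positivity)
  · norm_num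

lemma Sstar_nonneg (k : ℕ) (i j : Fin (k + 2)) : 0 ≤ Sstar k i j := by
  unfold Sstar; simp only [Matrix.of_apply]; split <;> norm_num

lemma rowsum_le (k : ℕ) (i : Fin (k + 2)) :
    ∑ j, Sstar k i j * dw k j ≤ (Real.sqrt (k + 1) + 1) * dw k i := by
  set s := Real.sqrt (k + 1) with hs
  have hs1 : 1 ≤ s := by
    have h := Real.sqrt_le_sqrt (show (1:ℝ) ≤ (k:ℝ) + 1 by
      have : (0:ℝ) ≤ (k:ℝ) := Nat.cast_nonneg k; linarith)
    rwa [Real.sqrt_one] at h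
  have hs2 : s ^ 2 = (k : ℝ) + 1 := Real.sq_sqrt (by positivity)
  have h1 : (1 : Fin (k + 2)).val = 1 := rfl
  rcases Nat.lt_or_ge i.val 2 with hi | hi
  · interval_cases h : i.val
    · -- row 0 : only entry at column 1
      have hcol : ∀ j : Fin (k + 2), Sstar k i j * dw k j
          = if j = (1 : Fin (k+2)) then s else 0 := by
        intro j
        unfold Sstar dw
        simp only [Matrix.of_apply]
        by_cases hj : j = (1 : Fin (k+2))
        · subst hj; rw [if_pos (Or.inl ⟨h, rfl⟩), if_pos rfl, if_pos h1, one_mul]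
        · have hj1 : j.val ≠ 1 := fun hv => hj (Fin.ext (by rw [hv, h1]))
          rw [if_neg, if_neg hj]
          · ring
          · push_neg
            exact ⟨fun _ => hj1, fun hc => by omega, fun hc => by omega,
              fun _ => by omega, fun _ => by omega⟩
      rw [Finset.sum_congr rfl fun j _ => hcol j, Finset.sum_ite_eq' Finset.univ _ _,
        if_pos (Finset.mem_univ _)]
      have hd : dw k i = 1 := by unfold dw; rw [if_neg (by omega)]
      rw [hd]; nlinarith
    · -- row 1 : all entries are 1
      have hrow : ∀ j : Fin (k + 2), Sstar k i j * dw k j = dw k j := by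
        intro j
        unfold Sstar
        simp only [Matrix.of_apply]
        rw [if_pos, one_mul]
        by_cases hj0 : j.val = 0
        · exact Or.inr (Or.inl ⟨h, hj0⟩)
        by_cases hj1' : j.val = 1
        · exact Or.inr (Or.inr (Or.inr (Or.inr ⟨Fin.ext (by omega), by omega⟩)))
        · exact Or.inr (Or.inr (Or.inl ⟨h, by omega⟩))
      rw [Finset.sum_congr rfl fun j _ => hrow j]
      have hsum : ∑ j, dw k j = s + (k + 1) := by
        have hterm : ∀ j : Fin (k + 2),
            dw k j = 1 + (if j = (1 : Fin (k+2)) then s - 1 else 0) := by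
          intro j
          unfold dw
          by_cases hj : j = (1 : Fin (k+2))
          · subst hj; rw [if_pos h1, if_pos rfl]; ring
          · rw [if_neg (fun hv => hj (Fin.ext (by rw [hv, h1]))), if_neg hj]; ring
        rw [Finset.sum_congr rfl fun j _ => hterm j, Finset.sum_add_distrib,
          Finset.sum_ite_eq' Finset.univ _ _, if_pos (Finset.mem_univ _),
          Finset.sum_const, Finset.card_univ, Fintype.card_fin]
        ring
      rw [hsum]
      have hdwi : dw k i = s := by unfold dw; rw [if_pos h]
      rw [hdwi]; nlinarith
  · -- row i with i.val ≥ 2 : entries at column 1 and diagonal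
    have hine : i ≠ (1 : Fin (k+2)) := fun hc => by
      rw [hc, h1] at hi; omega
    have hcol : ∀ j : Fin (k + 2), Sstar k i j * dw k j
        = (if j = (1 : Fin (k+2)) then s else 0) + (if j = i then 1 else 0) := by
      intro j
      unfold Sstar dw
      simp only [Matrix.of_apply]
      by_cases hj : j = (1 : Fin (k+2))
      · subst hj
        rw [if_pos (Or.inr (Or.inr (Or.inr (Or.inl ⟨h1, hi⟩)))), if_pos h1, one_mul,
          if_pos rfl, if_neg (fun hc => hine hc.symm), add_zero]
      · have hj1 : j.val ≠ 1 := fun hv => hj (Fin.ext (by rw [hv, h1]))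
        by_cases hji : j = i
        · subst hji
          rw [if_pos (Or.inr (Or.inr (Or.inr (Or.inr ⟨rfl, by omega⟩)))), if_neg hj1,
            one_mul, if_neg hj, if_pos rfl, zero_add]
        · rw [if_neg, if_neg hj, if_neg hji]
          · ring
          · push_neg
            exact ⟨fun hc => by omega, fun hc => by omega, fun hc => by omega,
              fun hc => absurd hc hj1, fun hij => absurd hij.symm hji⟩
    rw [Finset.sum_congr rfl fun j _ => hcol j, Finset.sum_add_distrib,
      Finset.sum_ite_eq' Finset.univ _ _, Finset.sum_ite_eq' Finset.univ _ _,
      if_pos (Finset.mem_univ _), if_pos (Finset.mem_univ _)]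
    have hd : dw k i = 1 := by unfold dw; rw [if_neg (by omega)]
    rw [hd, mul_one]

/-- The spectral radius of the sign pattern of the star model with self-infections is at
most `√(k+1) + 1`. -/
theorem specRad_sign_pattern_le (k : ℕ) :
    specRad (Sstar k) ≤ Real.sqrt (k + 1) + 1 := by
  set B := Real.sqrt (k + 1) + 1 with hB
  have hBpos : 0 ≤ B := by positivity
  apply Real.sSup_le _ hBpos
  rintro r ⟨μ, hroot, rfl⟩
  -- get an eigenvector
  obtain ⟨v, hv, hmv⟩ := exists_eigenvector_of_isRoot _ μ hroot
  -- choose the index maximizing |v j| / d j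
  obtain ⟨i, -, hmax⟩ := Finset.exists_max_image Finset.univ
    (fun j => ‖v j‖ / dw k j) ⟨0, Finset.mem_univ 0⟩
  have hmax' : ∀ j, ‖v j‖ ≤ ‖v i‖ / dw k i * dw k j := by
    intro j
    have := hmax j (Finset.mem_univ j)
    calc ‖v j‖ = ‖v j‖ / dw k j * dw k j :=
          (div_mul_cancel₀ _ (dw_pos k j).ne').symm
      _ ≤ ‖v i‖ / dw k i * dw k j :=
          mul_le_mul_of_nonneg_right this (dw_pos k j).le
  -- |v i| > 0
  have hvi : 0 < ‖v i‖ := by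
    obtain ⟨j0, hj0⟩ := Function.ne_iff.mp hv
    have h0 : 0 < ‖v j0‖ / dw k j0 :=
      div_pos (by simpa using hj0) (dw_pos k j0)
    have := lt_of_lt_of_le h0 (hmax j0 (Finset.mem_univ j0))
    exact lt_of_lt_of_le (mul_pos this (dw_pos k i))
      (by rw [div_mul_cancel₀ _ (dw_pos k i).ne'])
  -- the eigenvalue equation at row i
  have heq : μ * v i = ∑ j, ((Sstar k).map (algebraMap ℝ ℂ)) i j * v j := by
    have := congrFun hmv i
    simpa [Matrix.mulVec, dotProduct, Pi.smul_apply, smul_eq_mul] using this.symm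
  have habs : ‖μ‖ * ‖v i‖
      ≤ ‖v i‖ / dw k i * ∑ j, Sstar k i j * dw k j := by
    calc ‖μ‖ * ‖v i‖ = ‖μ * v i‖ := (norm_mul _ _).symm
      _ = ‖∑ j, ((Sstar k).map (algebraMap ℝ ℂ)) i j * v j‖ := by rw [heq]
      _ ≤ ∑ j, ‖((Sstar k).map (algebraMap ℝ ℂ)) i j * v j‖ := by
          exact norm_sum_le _ _
      _ ≤ ∑ j, Sstar k i j * (‖v i‖ / dw k i * dw k j) := by
          apply Finset.sum_le_sum
          intro j _
          rw [Matrix.map_apply, norm_mul]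
          have : ‖algebraMap ℝ ℂ (Sstar k i j)‖ = Sstar k i j := by
            rw [show (algebraMap ℝ ℂ) (Sstar k i j) = ((Sstar k i j : ℝ) : ℂ) from rfl,
              Complex.norm_real, Real.norm_eq_abs, abs_of_nonneg (Sstar_nonneg k i j)]
          rw [this]
          exact mul_le_mul_of_nonneg_left (hmax' j) (Sstar_nonneg k i j)
      _ = ‖v i‖ / dw k i * ∑ j, Sstar k i j * dw k j := by
          rw [Finset.mul_sum]; apply Finset.sum_congr rfl; intro j _; ring
  have hfinal : ‖μ‖ * ‖v i‖ ≤ B * ‖v i‖ := by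
    calc ‖μ‖ * ‖v i‖
        ≤ ‖v i‖ / dw k i * ∑ j, Sstar k i j * dw k j := habs
      _ ≤ ‖v i‖ / dw k i * (B * dw k i) := by
          exact mul_le_mul_of_nonneg_left (rowsum_le k i)
            (div_nonneg (norm_nonneg _) (dw_pos k i).le)
      _ = B * (‖v i‖ / dw k i * dw k i) := by ring
      _ = B * ‖v i‖ := by rw [div_mul_cancel₀ _ (dw_pos k i).ne']
  exact le_of_mul_le_mul_right (by linarith [hfinal]) hvi
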